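/- The folding dynamics G is topologically transitive on the phase space X = 𝔠_N × ⟦−N,N⟧^ℕ: for all nonempty subsets U, V of X that are open for the metric d, there exist a point X ∈ U and an integer k > 0 such that G^k(X) ∈ V. -/

import Mathlib

open scoped BigOperators

namespace HP

/-- A conformation of `N+1` residues in absolute encoding
(the initial residue, always `0`, is omitted): `C k` is the paper's `C_{k+1}`. -/
abbrev Conf (N : ℕ) := Fin N → ZMod 4

open Classical in
/-- `δ(a,b) = 0` if `a = b`, `1` otherwise. -/
noncomputable def delta {α : Type*} (a b : α) : ℝ := if a = b then 0 else 1

/-- `d_C(C,Č) = Σ_{k=1}^N δ(C_k,Č_k)·2^{N−k}`. -/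
noncomputable def dC (N : ℕ) (C C' : Conf N) : ℝ :=
  ∑ k : Fin N, delta (C k) (C' k) * (2 : ℝ) ^ (N - 1 - (k : ℕ))

/-- `d_F(F,F̌) = (9/(2N))·Σ_{k=0}^∞ |F^k − F̌^k|/10^{k+1}`. -/
noncomputable def dF (N : ℕ) (F F' : ℕ → ℤ) : ℝ :=
  (9 / (2 * (N : ℝ))) * ∑' k : ℕ, |((F k : ℝ)) - ((F' k : ℝ))| / 10 ^ (k + 1)

/-- `d((C,F),(Č,F̌)) = d_C(C,Č) + d_F(F,F̌)`. -/
noncomputable def distX (N : ℕ) (X Y : Conf N × (ℕ → ℤ)) : ℝ :=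
  dC N X.1 Y.1 + dF N X.2 Y.2

/-- A folding sequence takes values in `⟦−N,N⟧`. -/
def validSeq (N : ℕ) (F : ℕ → ℤ) : Prop := ∀ k, |F k| ≤ (N : ℤ)

/-- The fold map `f_k`: residues with (paper) index `≥ |k|` are rotated by
`f^{sign k}` where `f x = x + 1` (in `ℤ/4ℤ`); `f_0 = id`. -/
def foldMap (N : ℕ) (k : ℤ) (C : Conf N) : Conf N :=
  fun j => if ((j : ℕ) : ℤ) + 1 < |k| then C j else C j + (Int.sign k : ZMod 4)

/-- The folding dynamics `G(C,F) = (f_{i(F)}(C), σ(F))`. -/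
def G (N : ℕ) : Conf N × (ℕ → ℤ) → Conf N × (ℕ → ℤ) :=
  fun X => (foldMap N (X.2 0) X.1, fun n => X.2 (n + 1))

/-- The shift `σ` on folding sequences. -/
def shiftF (F : ℕ → ℤ) : ℕ → ℤ := fun k => F (k + 1)

/-- Unit move in the 2D lattice associated with an absolute encoding letter. -/
def step (c : ZMod 4) : ℤ × ℤ :=
  if c = 0 then (1, 0) else if c = 1 then (0, -1) else if c = 2 then (-1, 0) else (0, 1)

/-- `pos N C i` is the lattice point `X_i` of the 2D representation `p(C)`. -/
def pos (N : ℕ) (C : Conf N) : ℕ → ℤ × ℤ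
  | 0 => (0, 0)
  | i + 1 => pos N C i + (if h : i < N then step (C ⟨i, h⟩) else 0)

/-- The SAW requirement: the lattice points `X_0, …, X_N` are pairwise distinct. -/
def SAW (N : ℕ) (C : Conf N) : Prop :=
  ∀ i j : ℕ, i ≤ N → j ≤ N → pos N C i = pos N C j → i = j

/-- Successive application of fold maps `f_{k_1}, …, f_{k_n}`. -/
def folds (N : ℕ) : Conf N → List ℤ → Conf N
  | C, [] => C
  | C, k :: t => folds N (foldMap N k C) t

/-- The set `𝔠_N` of acceptable conformations: obtained from `(0,…,0)` by a
nonempty sequence of folds in `⟦−N,N⟧`, all intermediate conformations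
(including the initial and final ones) satisfying the SAW requirement. -/
def acceptable (N : ℕ) (C : Conf N) : Prop :=
  ∃ L : List ℤ, L ≠ [] ∧ (∀ k ∈ L, |k| ≤ (N : ℤ)) ∧
    folds N (fun _ => 0) L = C ∧
    ∀ p : List ℤ, p <+: L → SAW N (folds N (fun _ => 0) p)

/-- Membership in the phase space `X = 𝔠_N × ⟦−N,N⟧^ℕ`. -/
def inX (N : ℕ) (X : Conf N × (ℕ → ℤ)) : Prop :=
  acceptable N X.1 ∧ validSeq N X.2

/-- `U` is open in the metric space `(X, d)` (relative topology on `𝔠_N × ⟦−N,N⟧^ℕ`). -/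
def openIn (N : ℕ) (U : Set (Conf N × (ℕ → ℤ))) : Prop :=
  ∀ x ∈ U, ∃ ε > (0 : ℝ), ∀ y, inX N y → distX N x y < ε → y ∈ U

/-- `A` is closed in the metric space `(X, d)` (relative topology). -/
def closedIn (N : ℕ) (A : Set (Conf N × (ℕ → ℤ))) : Prop :=
  ∀ x, inX N x → x ∉ A → ∃ ε > (0 : ℝ), ∀ y, inX N y → distX N x y < ε → y ∉ A


section Aux

lemma folds_append (N : ℕ) (C : Conf N) (L₁ L₂ : List ℤ) :
    folds N C (L₁ ++ L₂) = folds N (folds N C L₁) L₂ := by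
  induction L₁ generalizing C with
  | nil => rfl
  | cons a t ih => simpa [folds] using ih (foldMap N a C)

lemma foldMap_pos' (N m : ℕ) (C : Conf N) (j : Fin N) :
    foldMap N ((m : ℤ) + 1) C j = if (j : ℕ) < m then C j else C j + 1 := by
  unfold foldMap
  have h1 : |(m : ℤ) + 1| = (m : ℤ) + 1 := abs_of_nonneg (by positivity)
  have h2 : Int.sign ((m : ℤ) + 1) = 1 := Int.sign_eq_one_of_pos (by positivity)
  rw [h1, h2]
  have h3 : (((j:ℕ):ℤ) + 1 < (m:ℤ) + 1) ↔ ((j:ℕ) < m) := by omega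
  simp [h3]

lemma folds_replicate (N m : ℕ) (r : ℕ) (C : Conf N) :
    folds N C (List.replicate r ((m : ℤ) + 1)) =
      fun j : Fin N => if (j : ℕ) < m then C j else C j + (r : ZMod 4) := by
  induction r generalizing C with
  | zero => funext j; simp [folds]
  | succ r ih =>
    rw [List.replicate_succ]
    show folds N (foldMap N ((m:ℤ)+1) C) _ = _
    rw [ih]
    funext j
    rw [foldMap_pos']
    by_cases h : (j:ℕ) < m <;> simp [h] <;> push_cast <;> ring

lemma reach_aux (N : ℕ) : ∀ d m : ℕ, N ≤ m + d → ∀ D T : Conf N,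
    (∀ j : Fin N, (j : ℕ) < m → D j = T j) →
    ∃ L : List ℤ, (∀ k ∈ L, 0 < k ∧ k ≤ (N : ℤ)) ∧ folds N D L = T := by
  intro d
  induction d with
  | zero =>
    intro m hm D T hmatch
    exact ⟨[], by simp, funext fun j => hmatch j (lt_of_lt_of_le j.isLt (by omega))⟩
  | succ d ih =>
    intro m hm D T hmatch
    by_cases hmN : m < N
    · set c := T ⟨m, hmN⟩ - D ⟨m, hmN⟩ with hc
      set D' := folds N D (List.replicate c.val ((m:ℤ)+1)) with hD'
      have hD'eq : ∀ j : Fin N, D' j = if (j:ℕ) < m then D j else D j + c := by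
        intro j
        rw [hD', folds_replicate]
        simp [ZMod.natCast_val, ZMod.cast_id]
      have hmatch' : ∀ j : Fin N, (j : ℕ) < m + 1 → D' j = T j := by
        intro j hj
        rw [hD'eq]
        rcases Nat.lt_or_ge (j : ℕ) m with h | h
        · simp [h, hmatch j h]
        · have hjm : j = ⟨m, hmN⟩ := Fin.ext (by simp; omega)
          subst hjm
          simp [hc]
      obtain ⟨L₁, hL₁, hfold⟩ := ih (m+1) (by omega) D' T hmatch'
      refine ⟨List.replicate c.val ((m:ℤ)+1) ++ L₁, ?_, ?_⟩
      · intro k hk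
        rcases List.mem_append.1 hk with h | h
        · rw [List.eq_of_mem_replicate h]
          constructor <;> [positivity; exact_mod_cast hmN]
        · exact hL₁ k h
      · rw [folds_append, ← hD', hfold]
    · exact ⟨[], by simp, funext fun j => hmatch j (lt_of_lt_of_le j.isLt (by omega))⟩

lemma reach (N : ℕ) (D T : Conf N) :
    ∃ L : List ℤ, (∀ k ∈ L, 0 < k ∧ k ≤ (N : ℤ)) ∧ folds N D L = T :=
  reach_aux N N 0 (by omega) D T (fun j hj => by omega)

lemma iterate_G (N : ℕ) : ∀ (k : ℕ) (C : Conf N) (F : ℕ → ℤ),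
    (G N)^[k] (C, F) = (folds N C (List.ofFn fun i : Fin k => F i), fun n => F (n + k)) := by
  intro k
  induction k with
  | zero => intro C F; simp [folds]
  | succ k ih =>
    intro C F
    rw [Function.iterate_succ_apply]
    show (G N)^[k] (foldMap N (F 0) C, fun n => F (n + 1)) = _
    rw [ih]
    have h1 : (List.ofFn fun i : Fin (k+1) => F i) = F 0 :: List.ofFn (fun i : Fin k => F ((i:ℕ)+1)) := by
      rw [List.ofFn_succ]; simp
    rw [h1]
    refine Prod.ext rfl ?_
    funext n
    show F (n + k + 1) = F (n + (k + 1))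
    rfl

lemma dF_le (N n : ℕ) (hN : 1 ≤ N) (F F' : ℕ → ℤ)
    (hF : validSeq N F) (hF' : validSeq N F')
    (hagree : ∀ k < n, F k = F' k) :
    dF N F F' ≤ (1/10 : ℝ) ^ n := by
  have hN0 : (0:ℝ) < N := by exact_mod_cast hN
  set c : ℝ := 2 * N / 10 with hcdef
  set g : ℕ → ℝ := fun k => |((F k : ℝ)) - ((F' k : ℝ))| / 10 ^ (k + 1) with hg
  have hg0 : ∀ k, 0 ≤ g k := fun k => div_nonneg (abs_nonneg _) (by positivity)
  have hbd : ∀ k, g k ≤ c * (1/10)^k := by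
    intro k
    have a1 : |(F k : ℝ)| ≤ (N:ℝ) := by
      rw [← Int.cast_abs]; exact_mod_cast hF k
    have a2 : |(F' k : ℝ)| ≤ (N:ℝ) := by
      rw [← Int.cast_abs]; exact_mod_cast hF' k
    have h1 : |((F k : ℝ)) - ((F' k : ℝ))| ≤ 2 * N := by
      have := abs_sub (F k : ℝ) (F' k : ℝ)
      linarith
    have h2 : g k ≤ (2*N) / 10^(k+1) :=
      (div_le_div_iff_of_pos_right (by positivity)).2 h1
    calc g k ≤ 2*N/10^(k+1) := h2
      _ = c * (1/10)^k := by
          rw [hcdef, div_pow, one_pow, pow_succ]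
          field_simp
  have hB : Summable (fun k => c * (1/10:ℝ)^k) :=
    (summable_geometric_of_lt_one (by norm_num) (by norm_num)).mul_left c
  have hgs : Summable g := Summable.of_nonneg_of_le hg0 hbd hB
  have hz : ∑ i ∈ Finset.range n, g i = 0 :=
    Finset.sum_eq_zero fun i hi => by
      simp [hg, hagree i (Finset.mem_range.1 hi)]
  have key : ∑' k, g k = ∑' i, g (i + n) := by
    have := Summable.sum_add_tsum_nat_add (f := g) n hgs
    linarith
  have hshift : Summable (fun i => g (i + n)) := (summable_nat_add_iff n).2 hgs
  have heq : (fun i : ℕ => c * (1/10:ℝ)^(i+n)) = fun i => (c*(1/10)^n) * (1/10)^i := by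
    funext i; rw [pow_add]; ring
  have hBshift : Summable (fun i : ℕ => c * (1/10:ℝ)^(i+n)) := by
    rw [heq]
    exact (summable_geometric_of_lt_one (by norm_num) (by norm_num)).mul_left _
  have h3 : ∑' i, g (i+n) ≤ ∑' i : ℕ, c * (1/10:ℝ)^(i+n) :=
    Summable.tsum_le_tsum (fun i => hbd (i+n)) hshift hBshift
  have h4 : ∑' i : ℕ, c * (1/10:ℝ)^(i+n) = c * (1/10)^n * (1 - 1/10)⁻¹ := by
    rw [heq, tsum_mul_left, tsum_geometric_of_lt_one (by norm_num) (by norm_num)]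
  have hmain : dF N F F' ≤ 9/(2*N) * (c * (1/10)^n * (1-1/10)⁻¹) := by
    unfold dF
    apply mul_le_mul_of_nonneg_left _ (by positivity)
    calc ∑' k, g k = ∑' i, g (i+n) := key
      _ ≤ ∑' i : ℕ, c * (1/10:ℝ)^(i+n) := h3
      _ = c * (1/10)^n * (1 - 1/10)⁻¹ := h4
  calc dF N F F' ≤ 9/(2*N) * (c * (1/10)^n * (1-1/10)⁻¹) := hmain
    _ = (1/10)^n := by
        rw [hcdef]
        field_simp
        ring

end Aux

/-- `G` is topologically transitive on `X = 𝔠_N × ⟦−N,N⟧^ℕ`: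
for all nonempty subsets `U, V` of `X` open for the metric `d`, some point of
`U` is sent into `V` by some iterate `G^k`, `k > 0`. -/
theorem G_topologically_transitive (N : ℕ) (hN : 1 ≤ N) :
    ∀ U V : Set (Conf N × (ℕ → ℤ)),
      (∀ x ∈ U, inX N x) → openIn N U → U.Nonempty →
      (∀ x ∈ V, inX N x) → openIn N V → V.Nonempty →
      ∃ x ∈ U, ∃ k : ℕ, 0 < k ∧ (G N)^[k] x ∈ V := by
  intro U V hU hUopen hUne hV hVopen hVne
  obtain ⟨xU, hxU⟩ := hUne
  obtain ⟨xV, hxV⟩ := hVne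
  obtain ⟨CU, FU⟩ := xU
  obtain ⟨CV, FV⟩ := xV
  obtain ⟨hCUacc, hFUval⟩ := hU _ hxU
  obtain ⟨hCVacc, hFVval⟩ := hV _ hxV
  obtain ⟨ε, hε, hball⟩ := hUopen _ hxU
  obtain ⟨n0, hn0⟩ := exists_pow_lt_of_lt_one hε (show (1/10:ℝ) < 1 by norm_num)
  set n := max n0 1 with hn
  have hnpow : (1/10:ℝ)^n < ε :=
    lt_of_le_of_lt (pow_le_pow_of_le_one (by norm_num) (by norm_num) (le_max_left _ _)) hn0
  have hn1 : 1 ≤ n := le_max_right _ _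
  set D := folds N CU (List.ofFn fun i : Fin n => FU i) with hD
  obtain ⟨L, hLval, hLfold⟩ := reach N D CV
  set len := L.length with hlen
  set Fx : ℕ → ℤ := fun k =>
    if k < n then FU k
    else if h2 : k - n < len then L.get ⟨k - n, h2⟩ else FV (k - n - len) with hFx
  have hFxval : validSeq N Fx := by
    intro k
    simp only [hFx]
    split_ifs with h1 h2
    · exact hFUval k
    · obtain ⟨hp, hl⟩ := hLval (L.get ⟨k - n, h2⟩) (L.get_mem _)
      rw [abs_of_pos hp]; exact hl
    · exact hFVval _
  have hxmem : (CU, Fx) ∈ U := by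
    refine hball (CU, Fx) ⟨hCUacc, hFxval⟩ ?_
    have hdC : dC N CU CU = 0 := by simp [dC, delta]
    have hdF : dF N FU Fx ≤ (1/10:ℝ)^n :=
      dF_le N n hN FU Fx hFUval hFxval (fun k hk => by simp [hFx, hk])
    have : distX N (CU, FU) (CU, Fx) = dC N CU CU + dF N FU Fx := rfl
    rw [this, hdC]
    linarith
  refine ⟨(CU, Fx), hxmem, n + len, by omega, ?_⟩
  rw [iterate_G]
  have hlist : (List.ofFn fun i : Fin (n + len) => Fx i) =
      (List.ofFn fun i : Fin n => FU i) ++ L := by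
    apply List.ext_getElem
    · simp [hlen]
    · intro i h1 h2
      simp only [List.getElem_ofFn, List.getElem_append, List.length_ofFn]
      by_cases h : i < n
      · simp only [hFx, if_pos h, dif_pos h, List.getElem_ofFn]
      · have hi2 : i - n < len := by
          simp only [List.length_ofFn] at h1; omega
        simp only [hFx, if_neg h, dif_pos hi2, dif_neg h]
        rw [List.get_eq_getElem]
  have hfirst : folds N CU (List.ofFn fun i : Fin (n+len) => Fx i) = CV := by
    rw [hlist, folds_append, ← hD, hLfold]
  have hsecond : (fun j => Fx (j + (n+len))) = FV := by
    funext j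
    have h1 : ¬ (j + (n+len) < n) := by omega
    have h2 : ¬ (j + (n+len) - n < len) := by omega
    simp only [hFx, if_neg h1, dif_neg h2]
    congr 1
    omega
  rw [hfirst, hsecond]
  exact hxV


end HP
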